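/- Let G be a 2-connected finite simple graph on exactly 5 vertices that has no K_{1,2}-structure-cut. Then G is isomorphic to the cycle C_5 or to the complete graph K_5. -/

import Mathlib

/-- A copy of `K_{1,2}` in `G`: three distinct vertices `a, b, c` with `b`
adjacent to both `a` and `c`. -/
def SimpleGraph.IsK12Copy {V : Type*} [DecidableEq V] (G : SimpleGraph V)
    (s : Finset V) : Prop :=
  ∃ a b c : V, a ≠ b ∧ a ≠ c ∧ b ≠ c ∧ s = {a, b, c} ∧ G.Adj b a ∧ G.Adj b c

/-- A `K_{1,2}`-structure-cut of `G`: a nonempty collection of pairwise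
vertex-disjoint copies of `K_{1,2}` whose removal leaves a graph that is
disconnected or has exactly one vertex. -/
def SimpleGraph.IsK12StructureCut {V : Type*} [DecidableEq V] (G : SimpleGraph V)
    (F : Finset (Finset V)) : Prop :=
  F.Nonempty ∧ (∀ s ∈ F, G.IsK12Copy s) ∧
    (F : Set (Finset V)).Pairwise Disjoint ∧
    (¬ (G.induce {v : V | ∀ s ∈ F, v ∉ s}).Preconnected ∨
      {v : V | ∀ s ∈ F, v ∉ s}.ncard = 1)

/-- A graph is 2-connected if it has more than 2 vertices and remains
connected after deleting any single vertex. -/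
def SimpleGraph.TwoConnected {V : Type*} [Fintype V] (G : SimpleGraph V) : Prop :=
  2 < Fintype.card V ∧ ∀ v : V, (G.induce {u : V | u ≠ v}).Connected

/-! ### Auxiliary machinery -/

open SimpleGraph

/-- Index of the (unordered) pair `{i, j}` among the ten pairs of `Fin 5`. -/
def eidxAux (i j : Fin 5) : ℕ :=
  (min i.val j.val) * (9 - min i.val j.val) / 2 + (max i.val j.val - min i.val j.val - 1)

lemma eidxAux_comm (i j : Fin 5) : eidxAux i j = eidxAux j i := by
  unfold eidxAux; rw [Nat.min_comm, Nat.max_comm]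

lemma eidxAux_lt : ∀ i j : Fin 5, i ≠ j → eidxAux i j < 10 := by decide

def adjBAux (f : Fin 10 → Bool) (i j : Fin 5) : Bool :=
  if h : i = j then false else f ⟨eidxAux i j, eidxAux_lt i j h⟩

/-- The graph on `Fin 5` encoded by ten bits. -/
def GrAux (f : Fin 10 → Bool) : SimpleGraph (Fin 5) where
  Adj i j := adjBAux f i j = true
  symm := by
    refine ⟨fun i j h => ?_⟩
    rcases eq_or_ne i j with rfl | hne
    · exact h
    · unfold adjBAux at h ⊢
      rw [dif_neg (Ne.symm hne)]
      rw [dif_neg hne] at h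
      rw [show (⟨eidxAux j i, eidxAux_lt j i (Ne.symm hne)⟩ : Fin 10)
            = ⟨eidxAux i j, eidxAux_lt i j hne⟩ from Fin.ext (eidxAux_comm j i)]
      exact h
  loopless := by
    refine ⟨fun i h => ?_⟩; unfold adjBAux at h; rw [dif_pos rfl] at h; exact Bool.false_ne_true h

instance (f : Fin 10 → Bool) : DecidableRel (GrAux f).Adj :=
  fun i j => inferInstanceAs (Decidable (adjBAux f i j = true))

/-- The list of the ten pairs, inverse to `eidxAux`. -/
def prAux : Fin 10 → Fin 5 × Fin 5 :=
  ![(0,1), (0,2), (0,3), (0,4), (1,2), (1,3), (1,4), (2,3), (2,4), (3,4)]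

lemma prAux_bridge : ∀ i j : Fin 5, i = j ∨
    ∃ k : Fin 10, (k : ℕ) = eidxAux i j ∧ (prAux k = (i, j) ∨ prAux k = (j, i)) := by
  decide

def KeyProp (f : Fin 10 → Bool) : Prop :=
    (∀ a b c : Fin 5, a ≠ b → a ≠ c → b ≠ c → (GrAux f).Adj b a → (GrAux f).Adj b c →
      ∀ d e : Fin 5, a ≠ d → a ≠ e → b ≠ d → b ≠ e → c ≠ d → c ≠ e → d ≠ e →
        (GrAux f).Adj d e) →
    (∀ v : Fin 5, ∀ p : Fin 5 → Bool,
      (∃ a, a ≠ v ∧ p a = true) → (∃ b, b ≠ v ∧ p b = false) →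
      ∃ x y, x ≠ v ∧ y ≠ v ∧ p x = true ∧ p y = false ∧ (GrAux f).Adj x y) →
    ((∀ i j : Fin 5, i ≠ j → (GrAux f).Adj i j) ∨
      ∃ g : Fin 5 → Fin 5, Function.Bijective g ∧
        ∀ i j, ((GrAux f).Adj i j ↔ (cycleGraph 5).Adj (g i) (g j)))

set_option synthInstance.maxSize 4096 in
set_option synthInstance.maxHeartbeats 2000000 in
instance keyPropDec (f : Fin 10 → Bool) : Decidable (KeyProp f) := by
  unfold KeyProp; infer_instance

set_option maxRecDepth 4000 in
set_option maxHeartbeats 4000000 in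
theorem key10 : ∀ b0 b1 b2 b3 b4 b5 b6 b7 b8 b9 : Bool,
    KeyProp ![b0, b1, b2, b3, b4, b5, b6, b7, b8, b9] := by decide

theorem keyAll (f : Fin 10 → Bool) : KeyProp f := by
  have h := key10 (f 0) (f 1) (f 2) (f 3) (f 4) (f 5) (f 6) (f 7) (f 8) (f 9)
  have hf : ![f 0, f 1, f 2, f 3, f 4, f 5, f 6, f 7, f 8, f 9] = f := by
    funext k; fin_cases k <;> rfl
  rwa [hf] at h

/-- Walks cannot leave a set closed under adjacency. -/
lemma reach_mem_iff {W : Type*} {H : SimpleGraph W} {T : Set W}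
    (hT : ∀ x y : W, H.Adj x y → (x ∈ T ↔ y ∈ T)) {u v : W} (h : H.Reachable u v) :
    u ∈ T ↔ v ∈ T := by
  obtain ⟨w⟩ := h
  induction w with
  | nil => exact Iff.rfl
  | cons hadj _ ih => exact (hT _ _ hadj).trans ih

/-- Key consequence of having no `K_{1,2}`-structure-cut on five vertices. -/
lemma adj_of_nocut {V : Type*} [Fintype V] [DecidableEq V] (G : SimpleGraph V)
    (hcard : Fintype.card V = 5)
    (hnocut : ¬ ∃ F : Finset (Finset V), G.IsK12StructureCut F)
    {a b c d e : V} (hab : a ≠ b) (hac : a ≠ c) (had : a ≠ d) (hae : a ≠ e)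
    (hbc : b ≠ c) (hbd : b ≠ d) (hbe : b ≠ e) (hcd : c ≠ d) (hce : c ≠ e) (hde : d ≠ e)
    (hba : G.Adj b a) (hbc2 : G.Adj b c) : G.Adj d e := by
  by_contra hAdj
  apply hnocut
  refine ⟨{({a, b, c} : Finset V)}, Finset.singleton_nonempty _, ?_, ?_, Or.inl ?_⟩
  · intro s hs
    rw [Finset.mem_singleton] at hs
    subst hs
    exact ⟨a, b, c, hab, hac, hbc, rfl, hba, hbc2⟩
  · rw [Finset.coe_singleton]
    exact Set.pairwise_singleton _ _
  · -- the complement of {a,b,c} is {d,e} with no edge between d and e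
    set S : Set V := {v : V | ∀ s ∈ ({({a, b, c} : Finset V)} : Finset (Finset V)), v ∉ s}
      with hS
    have hmem : ∀ v : V, v ∈ S ↔ (v ≠ a ∧ v ≠ b ∧ v ≠ c) := by
      intro v
      simp [hS, Finset.mem_insert, Finset.mem_singleton, not_or]
    have hU : ∀ v : V, v = a ∨ v = b ∨ v = c ∨ v = d ∨ v = e := by
      have h5 : ({a, b, c, d, e} : Finset V).card = 5 := by
        rw [show ({a, b, c, d, e} : Finset V) = insert a (insert b (insert c (insert d {e})))
            from rfl]
        rw [Finset.card_insert_of_notMem (by simp [hab, hac, had, hae]),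
            Finset.card_insert_of_notMem (by simp [hbc, hbd, hbe]),
            Finset.card_insert_of_notMem (by simp [hcd, hce]),
            Finset.card_insert_of_notMem (by simp [hde]),
            Finset.card_singleton]
      have huniv : ({a, b, c, d, e} : Finset V) = Finset.univ :=
        Finset.eq_univ_of_card _ (h5.trans hcard.symm)
      intro v
      have : v ∈ ({a, b, c, d, e} : Finset V) := huniv ▸ Finset.mem_univ v
      simpa [Finset.mem_insert, Finset.mem_singleton] using this
    have hSde : ∀ v : V, v ∈ S → v = d ∨ v = e := by
      intro v hv
      rw [hmem] at hv
      rcases hU v with rfl | rfl | rfl | rfl | rfl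
      · exact absurd rfl hv.1
      · exact absurd rfl hv.2.1
      · exact absurd rfl hv.2.2
      · exact Or.inl rfl
      · exact Or.inr rfl
    have hbot : ∀ x y : S, ¬ (G.induce S).Adj x y := by
      rintro ⟨x, hx⟩ ⟨y, hy⟩ hadj
      have hxy : G.Adj x y := hadj
      rcases hSde x hx with rfl | rfl <;> rcases hSde y hy with rfl | rfl
      · exact G.loopless.irrefl _ hxy
      · exact hAdj hxy
      · exact hAdj (hxy.symm)
      · exact G.loopless.irrefl _ hxy
    intro hpc
    have hd : d ∈ S := (hmem d).2 ⟨had.symm, hbd.symm, hcd.symm⟩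
    have he : e ∈ S := (hmem e).2 ⟨hae.symm, hbe.symm, hce.symm⟩
    have hreach := hpc ⟨d, hd⟩ ⟨e, he⟩
    have : (⟨d, hd⟩ : S) = ⟨e, he⟩ := by
      obtain ⟨w⟩ := hreach
      cases w with
      | nil => rfl
      | cons hadj _ => exact absurd hadj (hbot _ _)
    exact hde (by simpa using congrArg Subtype.val this)

theorem two_connected_five_vertices_no_cut_iso {V : Type*} [Fintype V] [DecidableEq V]
    (G : SimpleGraph V) (hcard : Fintype.card V = 5) (h2c : G.TwoConnected)
    (hnocut : ¬ ∃ F : Finset (Finset V), G.IsK12StructureCut F) :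
    Nonempty (G ≃g SimpleGraph.cycleGraph 5) ∨ Nonempty (G ≃g completeGraph (Fin 5)) := by
  classical
  obtain e := Fintype.equivFinOfCardEq hcard
  set f : Fin 10 → Bool :=
    fun k => decide (G.Adj (e.symm (prAux k).1) (e.symm (prAux k).2)) with hfdef
  -- the encoded graph is isomorphic to G
  have hGr : ∀ i j : Fin 5, (GrAux f).Adj i j ↔ G.Adj (e.symm i) (e.symm j) := by
    intro i j
    rcases eq_or_ne i j with rfl | hne
    · exact iff_of_false ((GrAux f).loopless.irrefl i) (G.loopless.irrefl _)
    · rcases prAux_bridge i j with h | ⟨k, hk, hpr⟩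
      · exact absurd h hne
      · have hstep : (GrAux f).Adj i j ↔ f k = true := by
          show adjBAux f i j = true ↔ _
          unfold adjBAux
          rw [dif_neg hne,
            show (⟨eidxAux i j, eidxAux_lt i j hne⟩ : Fin 10) = k from (Fin.ext hk).symm]
        have hfk : f k = decide (G.Adj (e.symm (prAux k).1) (e.symm (prAux k).2)) := rfl
        rw [hstep, hfk]
        rcases hpr with h | h
        · rw [h]; simp only [decide_eq_true_iff]
        · rw [h]; simp only [decide_eq_true_iff]; exact G.adj_comm _ _
  have hiso : ∀ u v : V, (GrAux f).Adj (e u) (e v) ↔ G.Adj u v := by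
    intro u v
    rw [hGr, e.symm_apply_apply, e.symm_apply_apply]
  -- hypothesis 1 for the key lemma
  have hnc : ∀ a b c : Fin 5, a ≠ b → a ≠ c → b ≠ c →
      (GrAux f).Adj b a → (GrAux f).Adj b c →
      ∀ d e' : Fin 5, a ≠ d → a ≠ e' → b ≠ d → b ≠ e' → c ≠ d → c ≠ e' → d ≠ e' →
      (GrAux f).Adj d e' := by
    intro a b c hab hac hbc hba hbc2 d e' had hae hbd hbe hcd hce hde
    have hinj : Function.Injective e.symm := e.symm.injective
    rw [hGr] at hba hbc2 ⊢
    exact adj_of_nocut G hcard hnocut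
      (fun h => hab (hinj h)) (fun h => hac (hinj h)) (fun h => had (hinj h))
      (fun h => hae (hinj h)) (fun h => hbc (hinj h)) (fun h => hbd (hinj h))
      (fun h => hbe (hinj h)) (fun h => hcd (hinj h)) (fun h => hce (hinj h))
      (fun h => hde (hinj h)) hba hbc2
  -- hypothesis 2 for the key lemma
  have htc : ∀ v : Fin 5, ∀ p : Fin 5 → Bool,
      (∃ a, a ≠ v ∧ p a = true) → (∃ b, b ≠ v ∧ p b = false) →
      ∃ x y, x ≠ v ∧ y ≠ v ∧ p x = true ∧ p y = false ∧ (GrAux f).Adj x y := by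
    intro v p ⟨a, hav, hpa⟩ ⟨b, hbv, hpb⟩
    by_contra hno
    push_neg at hno
    set v' := e.symm v with hv'
    have hconn := (h2c.2 v').preconnected
    have ha' : e.symm a ∈ {u : V | u ≠ v'} := fun h => hav (e.symm.injective h)
    have hb' : e.symm b ∈ {u : V | u ≠ v'} := fun h => hbv (e.symm.injective h)
    have hreach := hconn ⟨e.symm a, ha'⟩ ⟨e.symm b, hb'⟩
    have hT : ∀ x y : {u : V | u ≠ v'},
        (G.induce {u : V | u ≠ v'}).Adj x y →
        (x ∈ {z : {u : V | u ≠ v'} | p (e ↑z) = true} ↔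
         y ∈ {z : {u : V | u ≠ v'} | p (e ↑z) = true}) := by
      rintro ⟨x, hx⟩ ⟨y, hy⟩ hadj
      have hxy : G.Adj x y := hadj
      have hXv : e x ≠ v := fun h => hx (by rw [hv', ← h, e.symm_apply_apply])
      have hYv : e y ≠ v := fun h => hy (by rw [hv', ← h, e.symm_apply_apply])
      have hXY : (GrAux f).Adj (e x) (e y) := (hiso x y).2 hxy
      simp only [Set.mem_setOf_eq]
      cases hpx : p (e x) <;> cases hpy : p (e y)
      · exact Iff.rfl
      · exact absurd hXY.symm (hno (e y) (e x) hYv hXv hpy hpx)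
      · exact absurd hXY (hno (e x) (e y) hXv hYv hpx hpy)
      · exact Iff.rfl
    have := reach_mem_iff hT hreach
    simp only [Set.mem_setOf_eq, e.apply_symm_apply] at this
    rw [hpa, hpb] at this
    exact Bool.false_ne_true (this.1 rfl)
  -- apply the key lemma
  rcases keyAll f hnc htc with hcomp | ⟨g, hbij, hiff⟩
  · right
    refine ⟨?_⟩
    have ψ : GrAux f ≃g completeGraph (Fin 5) :=
      ⟨Equiv.refl _, by
        intro i j
        simp only [completeGraph, Equiv.refl_apply, SimpleGraph.top_adj]
        exact ⟨fun h => hcomp i j h, fun h => (GrAux f).ne_of_adj h⟩⟩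
    exact (⟨e, fun {u v} => hiso u v⟩ : G ≃g GrAux f).trans ψ
  · left
    refine ⟨?_⟩
    have ψ : GrAux f ≃g cycleGraph 5 :=
      ⟨Equiv.ofBijective g hbij, fun {i j} => (hiff i j).symm⟩
    exact (⟨e, fun {u v} => hiso u v⟩ : G ≃g GrAux f).trans ψ
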